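/- A cellular automaton F on A^ℤ is nilpotent if and only if its limit set Ω_F = ⋂_{j∈ℕ} F^j(A^ℤ) is a singleton. -/

import Mathlib

/-- A cellular automaton on `A^ℤ` is nilpotent iff its limit set is a singleton. -/
theorem stmt12 {A : Type*} [Fintype A] [Nonempty A] [TopologicalSpace A] [DiscreteTopology A]
    (F : (ℤ → A) → (ℤ → A)) (hF : Continuous F)
    (hcomm : ∀ x : ℤ → A, F (fun i => x (i + 1)) = fun i => F x (i + 1)) :
    (∃ (z : ℤ → A) (q : ℕ), ∀ t ≥ q, F^[t] '' Set.univ = {z})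
      ↔ ∃ z : ℤ → A, (⋂ j : ℕ, F^[j] '' Set.univ) = {z} := by
  set S : ℕ → Set (ℤ → A) := fun j => F^[j] '' Set.univ with hS
  have hanti : ∀ j k, j ≤ k → S k ⊆ S j := by
    intro j k hjk
    obtain ⟨m, rfl⟩ := Nat.exists_eq_add_of_le hjk
    intro x hx
    obtain ⟨y, -, rfl⟩ := hx
    rw [Function.iterate_add_apply]
    exact ⟨F^[m] y, trivial, rfl⟩
  have hne : ∀ j, (S j).Nonempty := fun j =>
    ⟨F^[j] (Classical.arbitrary _), ⟨Classical.arbitrary _, trivial, rfl⟩⟩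
  constructor
  · rintro ⟨z, q, hz⟩
    refine ⟨z, Set.eq_singleton_iff_unique_mem.2 ⟨?_, ?_⟩⟩
    · refine Set.mem_iInter.2 fun j => hanti j (max j q) (le_max_left _ _) ?_
      have h1 : S (max j q) = {z} := hz _ (le_max_right j q)
      rw [h1]; rfl
    · intro x hx
      have := Set.mem_iInter.1 hx q
      rwa [hz q le_rfl, Set.mem_singleton_iff] at this
  · rintro ⟨z, hz⟩
    -- shift maps
    set σ : (ℤ → A) → (ℤ → A) := fun x i => x (i + 1) with hσ
    set τ : (ℤ → A) → (ℤ → A) := fun x i => x (i - 1) with hτ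
    have hστ : ∀ x, σ (τ x) = x := by
      intro x; funext i; simp [hσ, hτ]
    have hτσ : ∀ x, τ (σ x) = x := by
      intro x; funext i; simp [hσ, hτ]
    have hFσ : ∀ x, F (σ x) = σ (F x) := fun x => hcomm x
    have hFτ : ∀ x, F (τ x) = τ (F x) := by
      intro x
      have := hFσ (τ x)
      rw [hστ] at this
      rw [this, hτσ]
    have hiter : ∀ (g : (ℤ → A) → (ℤ → A)), (∀ x, g x = x → False) = False → True := fun _ _ => trivial
    have hiterσ : ∀ j x, F^[j] (σ x) = σ (F^[j] x) := by
      intro j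
      induction j with
      | zero => intro x; rfl
      | succ n ih => intro x; rw [Function.iterate_succ_apply, Function.iterate_succ_apply, hFσ, ih]
    have hiterτ : ∀ j x, F^[j] (τ x) = τ (F^[j] x) := by
      intro j
      induction j with
      | zero => intro x; rfl
      | succ n ih => intro x; rw [Function.iterate_succ_apply, Function.iterate_succ_apply, hFτ, ih]
    have hσS : ∀ j x, x ∈ S j → σ x ∈ S j := by
      rintro j x ⟨y, -, rfl⟩
      exact ⟨σ y, trivial, hiterσ j y⟩
    have hτS : ∀ j x, x ∈ S j → τ x ∈ S j := by
      rintro j x ⟨y, -, rfl⟩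
      exact ⟨τ y, trivial, hiterτ j y⟩
    have hzΩ : z ∈ ⋂ j : ℕ, S j := hz ▸ rfl
    -- z is shift-invariant, hence constant
    have hσz : σ z = z := by
      have : σ z ∈ ⋂ j : ℕ, S j :=
        Set.mem_iInter.2 fun j => hσS j z (Set.mem_iInter.1 hzΩ j)
      rw [hz] at this
      exact this
    have hzconst : ∀ i : ℤ, z i = z 0 := by
      have step : ∀ i : ℤ, z (i + 1) = z i := fun i => congrFun hσz i
      intro i
      induction i using Int.induction_on with
      | zero => rfl
      | succ n ih => rw [step n, ih]
      | pred n ih => rw [← ih, ← step (-n - 1)]; ring_nf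
    -- compactness: find q with S q ⊆ {x | x 0 = z 0}
    have hcontiter : ∀ j : ℕ, Continuous (F^[j]) := fun j => hF.iterate j
    have hScomp : ∀ j, IsCompact (S j) := fun j => isCompact_univ.image (hcontiter j)
    have hSclosed : ∀ j, IsClosed (S j) := fun j => (hScomp j).isClosed
    set Z : ℕ → Set (ℤ → A) := fun j => S j ∩ {x | x 0 ≠ z 0} with hZ
    have hZclosed : ∀ j, IsClosed (Z j) := by
      intro j
      have hopen : IsOpen ((fun x : ℤ → A => x 0) ⁻¹' {z 0}) :=
        (isOpen_discrete ({z 0} : Set A)).preimage (continuous_apply (0 : ℤ))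
      exact (hSclosed j).inter hopen.isClosed_compl
    have hZempty : (Set.univ ∩ ⋂ j : ℕ, Z j) = ∅ := by
      rw [Set.univ_inter]
      ext x
      simp only [Set.mem_iInter, Set.mem_empty_iff_false, iff_false]
      intro hx
      have hxΩ : x ∈ ⋂ j : ℕ, S j := Set.mem_iInter.2 fun j => (hx j).1
      rw [hz] at hxΩ
      exact (hx 0).2 (by rw [hxΩ])
    have hdir : Directed (· ⊇ ·) Z := by
      intro i j
      refine ⟨max i j, ?_, ?_⟩
      · exact Set.inter_subset_inter_left _ (hanti i _ (le_max_left _ _))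
      · exact Set.inter_subset_inter_left _ (hanti j _ (le_max_right _ _))
    obtain ⟨q, hq⟩ := isCompact_univ.elim_directed_family_closed Z hZclosed hZempty hdir
    rw [Set.univ_inter] at hq
    have hq0 : ∀ x ∈ S q, x 0 = z 0 := by
      intro x hx
      by_contra h
      exact absurd hq (Set.nonempty_iff_ne_empty.1 ⟨x, hx, h⟩)
    have hall : ∀ n : ℤ, ∀ x ∈ S q, x n = z 0 := by
      intro n
      induction n using Int.induction_on with
      | zero => exact hq0
      | succ k ih =>
        intro x hx
        have := ih (σ x) (hσS q x hx)
        simpa [hσ] using this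
      | pred k ih =>
        intro x hx
        have := ih (τ x) (hτS q x hx)
        simpa [hτ] using this
    have hSq : S q = {z} := by
      apply Set.eq_singleton_iff_nonempty_unique_mem.2 ⟨hne q, ?_⟩
      intro x hx
      funext n
      rw [hall n x hx, hzconst n]
    refine ⟨z, q, fun t ht => ?_⟩
    apply Set.eq_singleton_iff_nonempty_unique_mem.2 ⟨hne t, ?_⟩
    intro x hx
    have := hanti q t ht hx
    rw [hSq] at this
    exact this
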